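/- Let D be a design of strength R−1 (R ≥ 2) with n ≥ R factors, each factor given a normalized orthogonal coding, and assume that for every R-element set U of factors and every c ∈ U the Gram matrices of the column-centered main-effects model matrix of c and of the column-centered nonconstant columns of the full model matrix of U ∖ {c} are invertible. Then GR_ind(D) ≤ GR(D). -/

import Mathlib

open Finset Matrix

/-- A design `D` (rows = runs, coordinates = factors) has strength `t` if in every
projection onto `t` factors every level combination occurs equally often. -/
def hasStrength {N n : ℕ} (s : Fin n → ℕ) (D : Fin N → ∀ i, Fin (s i)) (t : ℕ) : Prop :=
  ∀ T : Finset (Fin n), T.card = t → ∀ x : ∀ i, Fin (s i),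
    (Finset.univ.filter fun r => ∀ i ∈ T, D r i = x i).card = N / ∏ i ∈ T, s i

/-- Normalized orthogonal coding: contrast columns have zero sum and
`Cᵀ C = m • 1` (squared length `m`, pairwise orthogonal). -/
def isNOC {m : ℕ} (C : Fin m → Fin (m - 1) → ℝ) : Prop :=
  (∀ j, ∑ l, C l j = 0) ∧
    ∀ j j', ∑ l, C l j * C l j' = if j = j' then (m : ℝ) else 0

/-- Column (indexed by the tuple `j`) of the interaction model matrix of the set `U`
of factors, evaluated at run `r`. -/
def intCol {N n : ℕ} {s : Fin n → ℕ} (C : ∀ i, Fin (s i) → Fin (s i - 1) → ℝ)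
    (D : Fin N → ∀ i, Fin (s i)) (U : Finset (Fin n))
    (j : ∀ i : U, Fin (s i.1 - 1)) (r : Fin N) : ℝ :=
  ∏ i : U, C i.1 (D r i.1) (j i)

/-- Projection frequency `a_k(U)`: sum of squared column sums of the interaction
model matrix of `U`, divided by `N²`. -/
noncomputable def projFreq {N n : ℕ} {s : Fin n → ℕ}
    (C : ∀ i, Fin (s i) → Fin (s i - 1) → ℝ)
    (D : Fin N → ∀ i, Fin (s i)) (U : Finset (Fin n)) : ℝ :=
  (∑ j : ∀ i : U, Fin (s i.1 - 1), (∑ r, intCol C D U j r) ^ 2) / (N : ℝ) ^ 2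

/-- Generalized resolution `GR = R + 1 - sqrt(max_U a_R(U)/(min_{i∈U} s i - 1))`,
the max running over all `R`-element sets of factors. -/
noncomputable def GR {N n : ℕ} {s : Fin n → ℕ} (R : ℕ)
    (C : ∀ i, Fin (s i) → Fin (s i - 1) → ℝ) (D : Fin N → ∀ i, Fin (s i)) : ℝ :=
  (R : ℝ) + 1 - Real.sqrt (sSup {v : ℝ | ∃ U : Finset (Fin n), U.card = R ∧
    v = projFreq C D U / (((sInf (s '' (U : Set (Fin n))) : ℕ) : ℝ) - 1)})

/-- Column-centering of a matrix with `N` rows. -/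
noncomputable def center {N : ℕ} {κ : Type*} (M : Matrix (Fin N) κ ℝ) :
    Matrix (Fin N) κ ℝ :=
  Matrix.of fun r k => M r k - (∑ r', M r' k) / (N : ℝ)

/-- Index type for the nonconstant columns of the full model matrix of `Cset`:
one column for each tuple of contrasts of each nonempty subset of `Cset`. -/
abbrev FullIdx {n : ℕ} (s : Fin n → ℕ) (Cset : Finset (Fin n)) : Type :=
  Σ S : {S : Finset (Fin n) // S ⊆ Cset ∧ S.Nonempty}, ∀ i : S.1, Fin (s i.1 - 1)

/-- Column-centered main-effects model matrix of factor `c` (coding `B`). -/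
noncomputable def Ymat {N n : ℕ} {s : Fin n → ℕ} (B : ∀ i, Fin (s i) → Fin (s i - 1) → ℝ)
    (D : Fin N → ∀ i, Fin (s i)) (c : Fin n) : Matrix (Fin N) (Fin (s c - 1)) ℝ :=
  center (Matrix.of fun r j => B c (D r c) j)

/-- Column-centered nonconstant columns of the full model matrix of `Cset` (coding `B`). -/
noncomputable def Xmat {N n : ℕ} {s : Fin n → ℕ} (B : ∀ i, Fin (s i) → Fin (s i - 1) → ℝ)
    (D : Fin N → ∀ i, Fin (s i)) (Cset : Finset (Fin n)) :
    Matrix (Fin N) (FullIdx s Cset) ℝ :=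
  center (Matrix.of fun r k => intCol B D k.1.1 k.2 r)

/-- Largest eigenvalue of a square real matrix. -/
noncomputable def maxEig {κ : Type*} [Fintype κ] (Q : Matrix κ κ ℝ) : ℝ :=
  sSup {μ : ℝ | ∃ v : κ → ℝ, v ≠ 0 ∧ Q.mulVec v = μ • v}

/-- Largest canonical correlation `r₁(Y_c; X_Cset)`: square root of the largest
eigenvalue of `S_yy⁻¹ S_yx S_xx⁻¹ S_xy`. -/
noncomputable def r1 {N n : ℕ} {s : Fin n → ℕ} (B : ∀ i, Fin (s i) → Fin (s i - 1) → ℝ)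
    (D : Fin N → ∀ i, Fin (s i)) (c : Fin n) (Cset : Finset (Fin n)) : ℝ :=
  Real.sqrt (maxEig
    (((Ymat B D c)ᵀ * Ymat B D c)⁻¹ * ((Ymat B D c)ᵀ * Xmat B D Cset) *
      ((Xmat B D Cset)ᵀ * Xmat B D Cset)⁻¹ * ((Xmat B D Cset)ᵀ * Ymat B D c)))

/-- `GR_ind = R + 1 -` the largest canonical correlation between any factor's
main effects and the full model in the other `R-1` factors of any `R`-factor projection. -/
noncomputable def GRind {N n : ℕ} {s : Fin n → ℕ} (R : ℕ)
    (C : ∀ i, Fin (s i) → Fin (s i - 1) → ℝ) (D : Fin N → ∀ i, Fin (s i)) : ℝ :=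
  (R : ℝ) + 1 - sSup {ρ : ℝ | ∃ U : Finset (Fin n), U.card = R ∧
    ∃ c ∈ U, ρ = r1 C D c (U.erase c)}


/-! ### Auxiliary lemmas -/

section Eig

lemma eig_bddAbove {κ : Type*} [Fintype κ] (Q : Matrix κ κ ℝ) :
    BddAbove {μ : ℝ | ∃ v : κ → ℝ, v ≠ 0 ∧ Q.mulVec v = μ • v} := by
  classical
  refine ⟨∑ i, ∑ k, |Q i k|, ?_⟩
  rintro μ ⟨v, hv, hQv⟩
  have hne : (Finset.univ : Finset κ).Nonempty := by
    rcases Function.ne_iff.mp hv with ⟨i, -⟩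
    exact ⟨i, mem_univ i⟩
  obtain ⟨i, -, hi⟩ := Finset.exists_max_image univ (fun k => |v k|) hne
  have hvi : 0 < |v i| := by
    rcases Function.ne_iff.mp hv with ⟨k, hk⟩
    have h1 : 0 < |v k| := abs_pos.mpr hk
    linarith [hi k (mem_univ k)]
  have key : μ * v i = ∑ k, Q i k * v k := by
    have := congrFun hQv i
    simpa [Matrix.mulVec, dotProduct, Pi.smul_apply, smul_eq_mul, mul_comm] using this.symm
  have h1 : |μ| * |v i| ≤ (∑ k, |Q i k|) * |v i| := by
    calc |μ| * |v i| = |μ * v i| := (abs_mul _ _).symm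
    _ = |∑ k, Q i k * v k| := by rw [key]
    _ ≤ ∑ k, |Q i k * v k| := Finset.abs_sum_le_sum_abs _ _
    _ ≤ ∑ k, |Q i k| * |v i| := by
        refine Finset.sum_le_sum fun k _ => ?_
        rw [abs_mul]
        exact mul_le_mul_of_nonneg_left (hi k (mem_univ k)) (abs_nonneg _)
    _ = (∑ k, |Q i k|) * |v i| := by rw [Finset.sum_mul]
  have h2 : |μ| ≤ ∑ k, |Q i k| := le_of_mul_le_mul_right h1 hvi
  have h3 : ∑ k, |Q i k| ≤ ∑ i, ∑ k, |Q i k| :=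
    Finset.single_le_sum (f := fun i => ∑ k, |Q i k|)
      (fun _ _ => Finset.sum_nonneg fun _ _ => abs_nonneg _) (mem_univ i)
  exact le_trans (le_abs_self μ) (le_trans h2 h3)

lemma trace_eq_sum_eigenvalues' {κ : Type*} [Fintype κ] [DecidableEq κ]
    {Q : Matrix κ κ ℝ} (hQ : Q.IsHermitian) : Q.trace = ∑ i, hQ.eigenvalues i := by
  conv_lhs => rw [hQ.spectral_theorem, Unitary.conjStarAlgAut_apply]
  rw [Matrix.trace_mul_comm, ← Matrix.mul_assoc, Unitary.coe_star_mul_self, Matrix.one_mul,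
    Matrix.trace_diagonal]
  simp

lemma le_maxEig {κ : Type*} [Fintype κ] [DecidableEq κ] [Nonempty κ]
    {Q : Matrix κ κ ℝ} (hQ : Q.IsHermitian) :
    Q.trace / (Fintype.card κ : ℝ) ≤ maxEig Q := by
  have hcard : (0:ℝ) < (Fintype.card κ : ℝ) := by exact_mod_cast Fintype.card_pos
  obtain ⟨i, -, hi⟩ := Finset.exists_le_of_sum_le (Finset.univ_nonempty (α := κ))
    (f := fun _ => Q.trace / (Fintype.card κ : ℝ)) (g := hQ.eigenvalues)
    (by rw [Finset.sum_const, ← trace_eq_sum_eigenvalues' hQ]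
        simp only [Finset.card_univ, nsmul_eq_mul]
        rw [mul_div_cancel₀]
        exact ne_of_gt hcard)
  refine le_trans hi (le_csSup (eig_bddAbove Q) ?_)
  refine ⟨⇑(hQ.eigenvectorBasis i), ?_, ?_⟩
  · have hnz := hQ.eigenvectorBasis.orthonormal.ne_zero i
    intro h
    exact hnz (by ext k; exact congrFun h k)
  · exact_mod_cast hQ.mulVec_eigenvectorBasis i

lemma inv_smul_one_mat {κ : Type*} [Fintype κ] [DecidableEq κ] {a : ℝ} (ha : a ≠ 0) :
    (a • (1 : Matrix κ κ ℝ))⁻¹ = a⁻¹ • 1 := by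
  apply Matrix.inv_eq_right_inv
  rw [Matrix.smul_mul, Matrix.mul_smul, Matrix.one_mul, smul_smul, mul_inv_cancel₀ ha, one_smul]

end Eig

section Counting
variable {N n : ℕ} {s : Fin n → ℕ} {C : ∀ i, Fin (s i) → Fin (s i - 1) → ℝ}
  {D : Fin N → ∀ i, Fin (s i)} {t : ℕ}

lemma sum_prod_strength (hs : ∀ i, 2 ≤ s i) (hD : hasStrength s D t)
    {T : Finset (Fin n)} (hT : T.card = t) (f : ∀ i, Fin (s i) → ℝ) :
    ∑ r, ∏ i ∈ T, f i (D r i) =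
      ((N / ∏ i ∈ T, s i : ℕ) : ℝ) * ∏ i ∈ T, (∑ l, f i l) := by
  classical
  have key := Finset.sum_fiberwise (Finset.univ : Finset (Fin N))
      (fun r => (fun i : T => D r i.1)) (fun r => ∏ i ∈ T, f i (D r i))
  rw [← key]
  have step : ∀ y : (∀ i : T, Fin (s i.1)),
      ∑ r ∈ univ.filter (fun r => (fun i : T => D r i.1) = y), ∏ i ∈ T, f i (D r i)
        = ((N / ∏ i ∈ T, s i : ℕ) : ℝ) * ∏ i ∈ T.attach, f i.1 (y i) := by
    intro y
    set x : ∀ i, Fin (s i) :=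
      fun i => if h : i ∈ T then y ⟨i, h⟩ else ⟨0, by have := hs i; omega⟩ with hx
    have hyx : ∀ i : T, x i.1 = y i := by
      intro i; rw [hx]; simp only [dif_pos i.2]
    have hfilter : (univ.filter (fun r => (fun i : T => D r i.1) = y))
        = univ.filter (fun r => ∀ i ∈ T, D r i = x i) := by
      ext r
      simp only [mem_filter, mem_univ, true_and, funext_iff]
      constructor
      · intro h i hi; rw [hyx ⟨i, hi⟩]; exact h ⟨i, hi⟩
      · intro h i; rw [← hyx i]; exact h i.1 i.2
    rw [hfilter]
    have hval : ∀ r ∈ univ.filter (fun r => ∀ i ∈ T, D r i = x i),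
        ∏ i ∈ T, f i (D r i) = ∏ i ∈ T.attach, f i.1 (y i) := by
      intro r hr
      simp only [mem_filter, mem_univ, true_and] at hr
      rw [← Finset.prod_attach T (fun i => f i (D r i))]
      exact Finset.prod_congr rfl fun i _ => by rw [hr i.1 i.2, hyx i]
    rw [Finset.sum_congr rfl hval, Finset.sum_const, hD T hT x, nsmul_eq_mul]
  rw [Finset.sum_congr rfl (fun y _ => step y), ← Finset.mul_sum]
  congr 1
  rw [← Finset.prod_attach T (fun i => ∑ l, f i l), ← Finset.univ_eq_attach]
  exact (Fintype.prod_sum (fun (i : T) (l : Fin (s i.1)) => f i.1 l)).symm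

lemma count_cast (hs : ∀ i, 2 ≤ s i) (hD : hasStrength s D t)
    {T : Finset (Fin n)} (hT : T.card = t) :
    ((N / ∏ i ∈ T, s i : ℕ) : ℝ) * ∏ i ∈ T, (s i : ℝ) = N := by
  have h := sum_prod_strength hs hD hT (fun i _ => (1:ℝ))
  simp only [Finset.prod_const_one, Finset.sum_const, Finset.card_univ, Fintype.card_fin,
    nsmul_eq_mul, mul_one] at h
  rw [← h]

lemma prod_sum_zero (hs : ∀ i, 2 ≤ s i) (hD : hasStrength s D t)
    {T : Finset (Fin n)} (hT : T.card = t)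
    (g : ∀ i, Fin (s i) → ℝ) {c : Fin n} (hc : c ∈ T) (h0 : ∑ l, g c l = 0) :
    ∑ r, ∏ i ∈ T, g i (D r i) = 0 := by
  rw [sum_prod_strength hs hD hT g]
  exact mul_eq_zero_of_right _ (Finset.prod_eq_zero hc h0)

/-- Extension of a level-tuple on a subset to a total tuple. -/
def extJ (hs : ∀ i, 2 ≤ s i) {U : Finset (Fin n)} (j : ∀ i : U, Fin (s i.1 - 1)) :
    ∀ i, Fin (s i - 1) :=
  fun i => if h : i ∈ U then j ⟨i, h⟩ else ⟨0, by have := hs i; omega⟩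

lemma extJ_mem (hs : ∀ i, 2 ≤ s i) {U : Finset (Fin n)} (j : ∀ i : U, Fin (s i.1 - 1))
    {i : Fin n} (h : i ∈ U) : extJ hs j i = j ⟨i, h⟩ := dif_pos h

lemma intCol_eq (hs : ∀ i, 2 ≤ s i) {U : Finset (Fin n)} (j : ∀ i : U, Fin (s i.1 - 1))
    (r : Fin N) : intCol C D U j r = ∏ i ∈ U, C i (D r i) (extJ hs j i) := by
  rw [intCol, Finset.univ_eq_attach]
  rw [Finset.prod_congr rfl (fun (x : U) (_ : x ∈ U.attach) =>
    (by rw [extJ_mem hs j x.2] : C x.1 (D r x.1) (j x) = C x.1 (D r x.1) (extJ hs j x.1)))]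
  exact Finset.prod_attach U (fun i => C i (D r i) (extJ hs j i))

lemma intCol_expand (hs : ∀ i, 2 ≤ s i) {S T : Finset (Fin n)} (hST : S ⊆ T)
    (j : ∀ i : S, Fin (s i.1 - 1)) (r : Fin N) :
    intCol C D S j r = ∏ i ∈ T, (if i ∈ S then C i (D r i) (extJ hs j i) else 1) := by
  rw [intCol_eq hs j r,
    Finset.prod_congr rfl (fun x hx =>
      ((if_pos hx).symm : C x (D r x) (extJ hs j x) = if x ∈ S then C x (D r x) (extJ hs j x) else 1))]
  exact Finset.prod_subset hST (fun x _ hxS => if_neg hxS)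

lemma main_colsum (hs : ∀ i, 2 ≤ s i) (hC : ∀ i, isNOC (C i)) (hD : hasStrength s D t)
    {T : Finset (Fin n)} (hT : T.card = t) {c : Fin n} (hc : c ∈ T) (j : Fin (s c - 1)) :
    ∑ r, C c (D r c) j = 0 := by
  classical
  set g : ∀ i, Fin (s i) → ℝ :=
    Function.update (fun i (_ : Fin (s i)) => (1:ℝ)) c (fun l => C c l j) with hg
  have hgc : g c = fun l => C c l j := Function.update_self _ _ _
  have hgo : ∀ b, b ≠ c → g b = fun _ => 1 := fun b hb => Function.update_of_ne hb _ _
  have h1 : ∀ r : Fin N, C c (D r c) j = ∏ i ∈ T, g i (D r i) := by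
    intro r
    rw [Finset.prod_eq_single_of_mem c hc (fun b _ hb => by rw [hgo b hb]), hgc]
  rw [Finset.sum_congr rfl (fun r _ => h1 r)]
  exact prod_sum_zero hs hD hT g hc (by rw [hgc]; exact (hC c).1 j)

lemma int_colsum (hs : ∀ i, 2 ≤ s i) (hC : ∀ i, isNOC (C i)) (hD : hasStrength s D t)
    {T : Finset (Fin n)} (hT : T.card = t) {S : Finset (Fin n)} (hST : S ⊆ T)
    (hSne : S.Nonempty) (j : ∀ i : S, Fin (s i.1 - 1)) :
    ∑ r, intCol C D S j r = 0 := by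
  classical
  obtain ⟨c, hcS⟩ := hSne
  set g : ∀ i, Fin (s i) → ℝ := fun i l => if i ∈ S then C i l (extJ hs j i) else 1 with hg
  rw [Finset.sum_congr rfl (fun r _ => intCol_expand hs hST j r)]
  exact prod_sum_zero hs hD hT g (hST hcS)
    (by simp only [hg, if_pos hcS]; exact (hC c).1 _)

lemma center_eq_self {κ : Type*} (M : Matrix (Fin N) κ ℝ) (h : ∀ k, ∑ r, M r k = 0) :
    center M = M := by
  ext r k; simp [center, h k]

lemma Ymat_eq (hs : ∀ i, 2 ≤ s i) (hC : ∀ i, isNOC (C i)) (hD : hasStrength s D t)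
    {T : Finset (Fin n)} (hT : T.card = t) {c : Fin n} (hc : c ∈ T) :
    Ymat C D c = Matrix.of (fun r j => C c (D r c) j) :=
  center_eq_self _ fun j => main_colsum hs hC hD hT hc j

lemma Xmat_eq (hs : ∀ i, 2 ≤ s i) (hC : ∀ i, isNOC (C i)) (hD : hasStrength s D t)
    {T : Finset (Fin n)} (hT : T.card = t) :
    Xmat C D T = Matrix.of (fun r (k : FullIdx s T) => intCol C D k.1.1 k.2 r) :=
  center_eq_self _ fun k => int_colsum hs hC hD hT k.1.2.1 k.1.2.2 k.2

end Counting

section Gram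
variable {N n : ℕ} {s : Fin n → ℕ} {C : ∀ i, Fin (s i) → Fin (s i - 1) → ℝ}
  {D : Fin N → ∀ i, Fin (s i)} {t : ℕ}

lemma gramY (hs : ∀ i, 2 ≤ s i) (hC : ∀ i, isNOC (C i)) (hD : hasStrength s D t)
    {T : Finset (Fin n)} (hT : T.card = t) {c : Fin n} (hc : c ∈ T) :
    (Ymat C D c)ᵀ * Ymat C D c = (N : ℝ) • 1 := by
  classical
  rw [Ymat_eq hs hC hD hT hc]
  ext j j'
  rw [Matrix.mul_apply]
  simp only [Matrix.transpose_apply, Matrix.of_apply, Matrix.smul_apply, Matrix.one_apply,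
    smul_eq_mul]
  set g : ∀ i, Fin (s i) → ℝ :=
    Function.update (fun i (_ : Fin (s i)) => (1:ℝ)) c (fun l => C c l j * C c l j') with hg
  have hgc : g c = fun l => C c l j * C c l j' := Function.update_self _ _ _
  have hgo : ∀ b, b ≠ c → g b = fun _ => 1 := fun b hb => Function.update_of_ne hb _ _
  have h1 : ∀ r : Fin N, C c (D r c) j * C c (D r c) j' = ∏ i ∈ T, g i (D r i) := by
    intro r
    rw [Finset.prod_eq_single_of_mem c hc (fun b _ hb => by rw [hgo b hb]), hgc]
  rw [Finset.sum_congr rfl (fun r _ => h1 r), sum_prod_strength hs hD hT g]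
  by_cases hjj : j = j'
  · subst hjj
    have hfac : ∀ i ∈ T, (∑ l, g i l) = (s i : ℝ) := by
      intro i hi
      by_cases hic : i = c
      · subst hic
        rw [hgc]
        rw [show (∑ l, C i l j * C i l j) = if j = j then (s i : ℝ) else 0 from (hC i).2 j j]
        simp
      · rw [hgo i hic]; simp
    rw [Finset.prod_congr rfl hfac, count_cast hs hD hT]
    simp
  · have hz : (∑ l, g c l) = 0 := by
      rw [hgc, show (∑ l, C c l j * C c l j') = if j = j' then (s c : ℝ) else 0 from (hC c).2 j j',
        if_neg hjj]
    rw [mul_eq_zero_of_right _ (Finset.prod_eq_zero hc hz)]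
    simp [hjj]

lemma gramX (hs : ∀ i, 2 ≤ s i) (hC : ∀ i, isNOC (C i)) (hD : hasStrength s D t)
    {T : Finset (Fin n)} (hT : T.card = t) :
    (Xmat C D T)ᵀ * Xmat C D T = (N : ℝ) • 1 := by
  classical
  rw [Xmat_eq hs hC hD hT]
  ext k k'
  rw [Matrix.mul_apply]
  simp only [Matrix.transpose_apply, Matrix.of_apply, Matrix.smul_apply, Matrix.one_apply,
    smul_eq_mul]
  obtain ⟨⟨S, hST, hSne⟩, j⟩ := k
  obtain ⟨⟨S', hST', hSne'⟩, j'⟩ := k'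
  set J := extJ hs j with hJ
  set J' := extJ hs j' with hJ'
  set g : ∀ i, Fin (s i) → ℝ := fun i l =>
    (if i ∈ S then C i l (J i) else 1) * (if i ∈ S' then C i l (J' i) else 1) with hg
  have h1 : ∀ r : Fin N, intCol C D S j r * intCol C D S' j' r = ∏ i ∈ T, g i (D r i) := by
    intro r
    rw [intCol_expand hs hST j r, intCol_expand hs hST' j' r, ← Finset.prod_mul_distrib]
  rw [Finset.sum_congr rfl (fun r _ => h1 r), sum_prod_strength hs hD hT g]
  have hsum : ∀ i, (∑ l, g i l) =
      if i ∈ S then (if i ∈ S' then (if J i = J' i then (s i : ℝ) else 0) else 0)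
      else (if i ∈ S' then 0 else (s i : ℝ)) := by
    intro i
    by_cases h : i ∈ S <;> by_cases h' : i ∈ S' <;>
      simp only [hg, h, h', if_true, if_false, mul_one, one_mul]
    · exact (hC i).2 (J i) (J' i)
    · exact (hC i).1 (J i)
    · exact (hC i).1 (J' i)
    · simp
  by_cases hSS : S = S'
  · subst hSS
    by_cases hjj : j = j'
    · subst hjj
      have hfac : ∀ i ∈ T, (∑ l, g i l) = (s i : ℝ) := by
        intro i _
        rw [hsum i]
        by_cases h : i ∈ S <;> simp [h, hJ, hJ']
      rw [Finset.prod_congr rfl hfac, count_cast hs hD hT]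
      simp
    · have hex : ∃ i : S, j i ≠ j' i := by
        by_contra hco
        push_neg at hco
        exact hjj (funext fun i => hco i)
      obtain ⟨i, hi⟩ := hex
      have hJi : J i.1 ≠ J' i.1 := by
        rw [hJ, hJ', extJ_mem hs j i.2, extJ_mem hs j' i.2]
        simpa using hi
      have hz : (∑ l, g i.1 l) = 0 := by
        rw [hsum i.1]
        simp [i.2, hJi]
      rw [mul_eq_zero_of_right _ (Finset.prod_eq_zero (hST i.2) hz)]
      have hne : (⟨⟨S, hST, hSne⟩, j⟩ : FullIdx s T) ≠ ⟨⟨S, hST', hSne'⟩, j'⟩ := by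
        intro hh
        exact hjj (eq_of_heq (Sigma.mk.inj_iff.mp hh).2)
      simp [hne]
  · have hex : ∃ i, (i ∈ S ∧ i ∉ S') ∨ (i ∈ S' ∧ i ∉ S) := by
      by_contra hco
      push_neg at hco
      apply hSS
      ext a
      have := hco a
      tauto
    obtain ⟨i, hcase⟩ := hex
    have hiT : i ∈ T := by rcases hcase with ⟨h1', _⟩ | ⟨h1', _⟩; exacts [hST h1', hST' h1']
    have hz : (∑ l, g i l) = 0 := by
      rcases hcase with ⟨h1', h2'⟩ | ⟨h1', h2'⟩ <;> rw [hsum i] <;> simp [h1', h2']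
    rw [mul_eq_zero_of_right _ (Finset.prod_eq_zero hiT hz)]
    have hne : (⟨⟨S, hST, hSne⟩, j⟩ : FullIdx s T) ≠ ⟨⟨S', hST', hSne'⟩, j'⟩ := by
      intro hh
      exact hSS (congrArg (fun k : FullIdx s T => k.1.1) hh)
    simp [hne]

end Gram

/-- `GR_ind(D) ≤ GR(D)` for a strength `R-1` design with normalized
orthogonal codings, provided all the relevant Gram matrices are invertible. -/
theorem statement7 {N n R : ℕ} (hN : 1 ≤ N) (hR : 2 ≤ R) (hn : R ≤ n)
    {s : Fin n → ℕ} (hs : ∀ i, 2 ≤ s i)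
    (D : Fin N → ∀ i, Fin (s i)) (hD : hasStrength s D (R - 1))
    (C : ∀ i, Fin (s i) → Fin (s i - 1) → ℝ) (hC : ∀ i, isNOC (C i))
    (hGram : ∀ U : Finset (Fin n), U.card = R → ∀ c ∈ U,
      IsUnit ((Ymat C D c)ᵀ * Ymat C D c).det ∧
      IsUnit ((Xmat C D (U.erase c))ᵀ * Xmat C D (U.erase c)).det) :
    GRind R C D ≤ GR R C D := by
  classical
  set P : Set ℝ := {ρ : ℝ | ∃ U : Finset (Fin n), U.card = R ∧
    ∃ c ∈ U, ρ = r1 C D c (U.erase c)} with hPdef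
  have hPbdd : BddAbove P := by
    apply Set.Finite.bddAbove
    apply Set.Finite.subset (Set.finite_range
      (fun p : Finset (Fin n) × Fin n => r1 C D p.2 (p.1.erase p.2)))
    rintro ρ ⟨U, hU, c, hc, rfl⟩
    exact ⟨(U, c), rfl⟩
  have hPne : ∃ ρ ∈ P, 0 ≤ ρ := by
    obtain ⟨U₀, -, hU₀⟩ := Finset.exists_subset_card_eq (s := (Finset.univ : Finset (Fin n))) (n := R)
      (by simpa using hn)
    have hU₀ne : U₀.Nonempty := Finset.card_pos.mp (by omega)
    obtain ⟨c₀, hc₀⟩ := hU₀ne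
    exact ⟨r1 C D c₀ (U₀.erase c₀), ⟨U₀, hU₀, c₀, hc₀, rfl⟩, Real.sqrt_nonneg _⟩
  have hP0 : 0 ≤ sSup P := by
    obtain ⟨ρ, hρP, hρ0⟩ := hPne
    exact le_trans hρ0 (le_csSup hPbdd hρP)
  have hN0 : ((N : ℝ)) ≠ 0 := by positivity
  -- the key pointwise bound
  have key : ∀ U : Finset (Fin n), U.card = R →
      projFreq C D U / (((sInf (s '' (U : Set (Fin n))) : ℕ) : ℝ) - 1) ≤ sSup P ^ 2 := by
    intro U hU
    have hUne : U.Nonempty := Finset.card_pos.mp (by omega)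
    have himg : (s '' (U : Set (Fin n))).Nonempty := (hUne.to_set).image s
    obtain ⟨c, hcU', hsc⟩ := Nat.sInf_mem himg
    have hcU : c ∈ U := Finset.mem_coe.mp hcU'
    have hTcard : (U.erase c).card = R - 1 := by
      rw [Finset.card_erase_of_mem hcU, hU]
    have hTne : (U.erase c).Nonempty := Finset.card_pos.mp (by omega)
    obtain ⟨d, hdT⟩ := hTne
    have hdc : d ≠ c := (Finset.mem_erase.mp hdT).1
    have hdU : d ∈ U := Finset.mem_of_mem_erase hdT
    have hT'card : (U.erase d).card = R - 1 := by
      rw [Finset.card_erase_of_mem hdU, hU]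
    have hcT' : c ∈ U.erase d := Finset.mem_erase.mpr ⟨hdc.symm, hcU⟩
    -- Gram matrices
    have hYg : (Ymat C D c)ᵀ * Ymat C D c = (N : ℝ) • 1 := gramY hs hC hD hT'card hcT'
    have hXg : (Xmat C D (U.erase c))ᵀ * Xmat C D (U.erase c) = (N : ℝ) • 1 :=
      gramX hs hC hD hTcard
    set M : Matrix (Fin (s c - 1)) (FullIdx s (U.erase c)) ℝ :=
      (Ymat C D c)ᵀ * Xmat C D (U.erase c) with hM
    have hQ : ((Ymat C D c)ᵀ * Ymat C D c)⁻¹ * ((Ymat C D c)ᵀ * Xmat C D (U.erase c)) *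
        ((Xmat C D (U.erase c))ᵀ * Xmat C D (U.erase c))⁻¹ *
        ((Xmat C D (U.erase c))ᵀ * Ymat C D c)
        = ((N:ℝ)⁻¹ * (N:ℝ)⁻¹) • (M * Mᵀ) := by
      have hXtY : (Xmat C D (U.erase c))ᵀ * Ymat C D c = Mᵀ := by
        rw [hM, Matrix.transpose_mul, Matrix.transpose_transpose]
      rw [hYg, hXg, hXtY, inv_smul_one_mat (κ := Fin (s c - 1)) hN0,
        inv_smul_one_mat (κ := FullIdx s (U.erase c)) hN0, ← hM]
      rw [Matrix.smul_mul, Matrix.one_mul, Matrix.mul_smul, Matrix.mul_one, smul_smul,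
        Matrix.smul_mul]
    set Qm : Matrix (Fin (s c - 1)) (Fin (s c - 1)) ℝ := ((N:ℝ)⁻¹ * (N:ℝ)⁻¹) • (M * Mᵀ)
      with hQm
    have hMMt : (M * Mᵀ).IsHermitian := by
      have h2 := Matrix.isHermitian_mul_conjTranspose_self M
      rwa [Matrix.conjTranspose_eq_transpose_of_trivial] at h2
    have hHerm : Qm.IsHermitian := by
      show Qmᴴ = Qm
      rw [hQm, Matrix.conjTranspose_smul, hMMt.eq, star_trivial]
    have htr : Qm.trace = (∑ jc, ∑ k, (M jc k)^2) / (N:ℝ)^2 := by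
      rw [hQm, Matrix.trace_smul, smul_eq_mul]
      have h3 : (M * Mᵀ).trace = ∑ jc, ∑ k, (M jc k)^2 := by
        rw [Matrix.trace]
        refine Finset.sum_congr rfl fun jc _ => ?_
        rw [Matrix.diag_apply, Matrix.mul_apply]
        exact Finset.sum_congr rfl fun k _ => by rw [Matrix.transpose_apply, sq]
      rw [h3, sq, eq_div_iff (by positivity)]
      rw [mul_comm, ← mul_assoc, ← sq, ← sq, inv_pow,
        mul_inv_cancel₀ (show ((N:ℝ)^2) ≠ 0 by positivity), one_mul]
    -- column sums of the full interaction matrix as entries of M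
    have hcol : ∀ j : (∀ i : U, Fin (s i.1 - 1)),
        ∑ r, intCol C D U j r = M (j ⟨c, hcU⟩)
          ⟨⟨U.erase c, Finset.Subset.refl _, ⟨d, hdT⟩⟩,
            fun i => j ⟨i.1, Finset.mem_of_mem_erase i.2⟩⟩ := by
      intro j
      rw [hM, Matrix.mul_apply]
      rw [Ymat_eq hs hC hD hT'card hcT', Xmat_eq hs hC hD hTcard]
      apply Finset.sum_congr rfl
      intro r _
      simp only [Matrix.transpose_apply, Matrix.of_apply]
      rw [intCol_eq hs j r, ← Finset.mul_prod_erase U _ hcU]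
      congr 1
      · rw [extJ_mem hs j hcU]
      · rw [intCol_eq hs _ r]
        apply Finset.prod_congr rfl
        intro i hi
        congr 1
        rw [extJ_mem hs j (Finset.mem_of_mem_erase hi),
          extJ_mem hs _ hi]
    -- injectivity of the column map
    set φ : (∀ i : U, Fin (s i.1 - 1)) → Fin (s c - 1) × FullIdx s (U.erase c) :=
      fun j => (j ⟨c, hcU⟩,
        ⟨⟨U.erase c, Finset.Subset.refl _, ⟨d, hdT⟩⟩,
          fun i => j ⟨i.1, Finset.mem_of_mem_erase i.2⟩⟩) with hφ
    have hinj : ∀ j j' : (∀ i : U, Fin (s i.1 - 1)), φ j = φ j' → j = j' := by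
      intro j j' hjj
      have h1 : j ⟨c, hcU⟩ = j' ⟨c, hcU⟩ := congrArg Prod.fst hjj
      have h2 : (fun i : (U.erase c : Finset (Fin n)) =>
          j ⟨i.1, Finset.mem_of_mem_erase i.2⟩) =
          (fun i : (U.erase c : Finset (Fin n)) => j' ⟨i.1, Finset.mem_of_mem_erase i.2⟩) :=
        eq_of_heq (Sigma.mk.inj_iff.mp (congrArg Prod.snd hjj)).2
      funext i
      by_cases hic : i.1 = c
      · have hi : i = ⟨c, hcU⟩ := Subtype.ext hic
        rw [hi]; exact h1
      · have hiT : i.1 ∈ U.erase c := Finset.mem_erase.mpr ⟨hic, i.2⟩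
        exact congrFun h2 ⟨i.1, hiT⟩
    -- projection frequency bounded by the trace
    have hproj : projFreq C D U ≤ Qm.trace := by
      rw [projFreq, htr]
      have hNsq : (0:ℝ) < (N:ℝ)^2 := by positivity
      rw [div_le_div_iff_of_pos_right hNsq]
      have hstep : ∀ j : (∀ i : U, Fin (s i.1 - 1)),
          (∑ r, intCol C D U j r)^2 = (M (φ j).1 (φ j).2)^2 := by
        intro j; rw [hcol j]
      rw [Finset.sum_congr rfl fun j _ => hstep j]
      have himage := Finset.sum_image
        (s := (Finset.univ : Finset (∀ i : U, Fin (s i.1 - 1)))) (g := φ)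
        (f := fun p : Fin (s c - 1) × FullIdx s (U.erase c) => (M p.1 p.2)^2)
        (fun x _ y _ h => hinj x y h)
      rw [← himage]
      calc ∑ p ∈ Finset.univ.image φ, (M p.1 p.2)^2
          ≤ ∑ p : Fin (s c - 1) × FullIdx s (U.erase c), (M p.1 p.2)^2 :=
            Finset.sum_le_sum_of_subset_of_nonneg (Finset.subset_univ _)
              (fun p _ _ => sq_nonneg _)
        _ = ∑ jc, ∑ k, (M jc k)^2 :=
            Fintype.sum_prod_type (f := fun p : Fin (s c - 1) × FullIdx s (U.erase c) =>
              (M p.1 p.2)^2)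
    -- eigenvalue bound
    haveI : Nonempty (Fin (s c - 1)) := ⟨⟨0, by have := hs c; omega⟩⟩
    have hmax : Qm.trace / (Fintype.card (Fin (s c - 1)) : ℝ) ≤ maxEig Qm := le_maxEig hHerm
    have hcard : ((Fintype.card (Fin (s c - 1)) : ℕ) : ℝ) = (s c : ℝ) - 1 := by
      rw [Fintype.card_fin, Nat.cast_sub (by have := hs c; omega)]
      norm_num
    have hden : (0:ℝ) < (s c : ℝ) - 1 := by
      have := hs c
      have : (2:ℝ) ≤ (s c : ℝ) := by exact_mod_cast this
      linarith
    have hvle : projFreq C D U / ((s c : ℝ) - 1) ≤ maxEig Qm := by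
      refine le_trans ?_ hmax
      rw [hcard]
      exact (div_le_div_iff_of_pos_right hden).mpr hproj
    have hv0 : 0 ≤ projFreq C D U / ((s c : ℝ) - 1) := by
      apply div_nonneg _ (le_of_lt hden)
      rw [projFreq]
      positivity
    have hme0 : 0 ≤ maxEig Qm := le_trans hv0 hvle
    have hr1sq : (r1 C D c (U.erase c))^2 = maxEig Qm := by
      rw [r1, hQ, Real.sq_sqrt hme0]
    have hr1P : r1 C D c (U.erase c) ∈ P := ⟨U, hU, c, hcU, rfl⟩
    have hr1le : r1 C D c (U.erase c) ≤ sSup P := le_csSup hPbdd hr1P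
    have hfin : projFreq C D U / ((s c : ℝ) - 1) ≤ sSup P ^ 2 := by
      refine le_trans hvle ?_
      rw [← hr1sq]
      exact pow_le_pow_left₀ (Real.sqrt_nonneg _) hr1le 2
    rw [← hsc]
    exact hfin
  -- assemble
  rw [GRind, GR, ← hPdef]
  apply sub_le_sub_left
  have hVle : sSup {v : ℝ | ∃ U : Finset (Fin n), U.card = R ∧
      v = projFreq C D U / (((sInf (s '' (U : Set (Fin n))) : ℕ) : ℝ) - 1)} ≤ sSup P ^ 2 := by
    apply Real.sSup_le
    · rintro v ⟨U, hU, rfl⟩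
      exact key U hU
    · positivity
  calc Real.sqrt (sSup {v : ℝ | ∃ U : Finset (Fin n), U.card = R ∧
      v = projFreq C D U / (((sInf (s '' (U : Set (Fin n))) : ℕ) : ℝ) - 1)})
      ≤ Real.sqrt (sSup P ^ 2) := Real.sqrt_le_sqrt hVle
    _ = sSup P := Real.sqrt_sq hP0
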